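/- Let X be a metrizable topological space and E an equivalence relation on X which is not a closed subset of X × X. Then there is an injective continuous map f from either 𝕂 or 2 × 𝕂 into X which is a reduction witnessing one of the following: (i) f : 𝕂 → X with f(x) E f(y) ⇔ ((x ≠ 0 and y ≠ 0) or x = y); or (ii) f : 2 × 𝕂 → X with f(ε,x) E f(η,y) ⇔ ((ε,x) = (η,y) or (x = y and x ≠ 0)). -/

import Mathlib

/-- The compact countable space 𝕂 = {0} ∪ {2^{-k} | k ∈ ℕ} ⊆ ℝ. -/
def Kspace : Set ℝ := insert 0 {x : ℝ | ∃ k : ℕ, x = (1 / 2 : ℝ) ^ k}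

open Filter Topology

namespace KAux

lemma half_pow_pos (k : ℕ) : (0:ℝ) < (1/2 : ℝ)^k := pow_pos (by norm_num) k

lemma half_anti : StrictAnti (fun k : ℕ => (1/2:ℝ)^k) :=
  pow_right_strictAnti₀ (by norm_num) (by norm_num)

lemma half_inj : Function.Injective (fun k : ℕ => (1/2:ℝ)^k) := half_anti.injective

open scoped Classical in
noncomputable def idx (z : Kspace) : ℕ :=
  if h : ∃ k : ℕ, (z:ℝ) = (1/2)^k then h.choose else 0

lemma spec_ne (z : Kspace) (hz : (z:ℝ) ≠ 0) : (z:ℝ) = (1/2)^(idx z) := by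
  have h : ∃ k : ℕ, (z:ℝ) = (1/2:ℝ)^k := by
    rcases z.2 with h | hk
    · exact absurd h hz
    · exact hk
  rw [idx]
  rw [dif_pos h]
  exact h.choose_spec

lemma mem_K_cases (z : Kspace) : (z:ℝ) = 0 ∨ ∃ k : ℕ, (z:ℝ) = (1/2:ℝ)^k := z.2

/-- continuity criterion on Kspace -/
lemma continuous_K {X : Type*} [TopologicalSpace X] (u : ℕ → X) (c : X)
    (hu : Tendsto u atTop (𝓝 c)) :
    Continuous (fun z : Kspace => if (z:ℝ) = 0 then c else u (idx z)) := by
  set f : Kspace → X := fun z => if (z:ℝ) = 0 then c else u (idx z) with hf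
  rw [continuous_iff_continuousAt]
  intro z
  by_cases hz : (z:ℝ) = 0
  · -- at zero
    have hfz : f z = c := by simp [hf, hz]
    rw [ContinuousAt, hfz]
    intro V hV
    rw [tendsto_atTop'] at hu
    obtain ⟨N, hN⟩ := hu V hV
    have hU : IsOpen {z' : Kspace | (z':ℝ) < (1/2)^N} :=
      isOpen_Iio.preimage continuous_subtype_val
    have hzU : z ∈ {z' : Kspace | (z':ℝ) < (1/2)^N} := by
      simp only [Set.mem_setOf_eq, hz]; exact half_pow_pos N
    rw [Filter.mem_map]
    refine Filter.mem_of_superset (hU.mem_nhds hzU) ?_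
    intro w hw
    simp only [Set.mem_setOf_eq] at hw
    by_cases hw0 : (w:ℝ) = 0
    · simp only [Set.mem_preimage, hf, if_pos hw0]
      exact mem_of_mem_nhds hV
    · simp only [Set.mem_preimage, hf, if_neg hw0]
      apply hN
      have := spec_ne w hw0
      rw [this] at hw
      have : N < idx w := half_anti.lt_iff_gt.mp hw
      omega
  · -- isolated point
    have hev : ∀ᶠ w in 𝓝 z, w = z := by
      set k := idx z with hk
      have hzk : (z:ℝ) = (1/2)^k := spec_ne z hz
      have hU : IsOpen {w : Kspace | |(w:ℝ) - (1/2:ℝ)^k| < (1/2)^(k+1)} := by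
        have : IsOpen {x : ℝ | |x - (1/2:ℝ)^k| < (1/2)^(k+1)} := by
          have : {x : ℝ | |x - (1/2:ℝ)^k| < (1/2)^(k+1)} = Metric.ball ((1/2:ℝ)^k) ((1/2)^(k+1)) := by
            ext x; simp [Metric.mem_ball, Real.dist_eq]
          rw [this]; exact Metric.isOpen_ball
        exact this.preimage continuous_subtype_val
      have hzU : z ∈ {w : Kspace | |(w:ℝ) - (1/2:ℝ)^k| < (1/2)^(k+1)} := by
        show |(z:ℝ) - (1/2:ℝ)^k| < (1/2)^(k+1)
        rw [hzk, sub_self, abs_zero]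
        exact half_pow_pos (k+1)
      filter_upwards [hU.mem_nhds hzU] with w hw
      replace hw : |(w:ℝ) - (1/2:ℝ)^k| < (1/2)^(k+1) := hw
      have hks : (1/2:ℝ)^(k+1) = (1/2:ℝ)^k * (1/2) := pow_succ _ _
      rcases mem_K_cases w with hw0 | ⟨j, hj⟩
      · exfalso
        rw [hw0, zero_sub, abs_neg, abs_of_pos (half_pow_pos k)] at hw
        nlinarith [half_pow_pos k]
      · rcases lt_trichotomy j k with hjk | rfl | hjk
        · exfalso
          have h1 : (1/2:ℝ)^k ≤ (1/2:ℝ)^(j+1) := half_anti.antitone (by omega)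
          have h2 : (1/2:ℝ)^j = (1/2:ℝ)^(j+1) * 2 := by rw [pow_succ]; ring
          rw [hj] at hw
          rw [abs_lt] at hw
          nlinarith [half_pow_pos k]
        · exact Subtype.ext (hj.trans hzk.symm)
        · exfalso
          have h1 : (1/2:ℝ)^j ≤ (1/2:ℝ)^(k+1) := half_anti.antitone (by omega)
          rw [hj, abs_lt] at hw
          have := half_pow_pos j
          nlinarith
    have : f =ᶠ[𝓝 z] fun _ => f z := by
      filter_upwards [hev] with w hw; rw [hw]
    exact ContinuousAt.congr continuousAt_const this.symm


noncomputable def chooseSeq (P : ℕ → ℕ → Prop) (h : ∀ m, ∃ n, P m n) : ℕ → ℕ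
  | 0 => 0
  | i+1 => (h (chooseSeq P h i)).choose

lemma chooseSeq_spec (P : ℕ → ℕ → Prop) (h : ∀ m, ∃ n, P m n) (i : ℕ) :
    P (chooseSeq P h i) (chooseSeq P h (i+1)) := (h _).choose_spec

lemma exists_inj_subseq {X : Type*} [MetricSpace X] (u : ℕ → X) (c : X)
    (hu : Tendsto u atTop (𝓝 c)) (hne : ∀ n, u n ≠ c) :
    ∃ φ : ℕ → ℕ, StrictMono φ ∧ Function.Injective (u ∘ φ) := by
  have key : ∀ m, ∃ n, m < n ∧ dist (u n) c < dist (u m) c := by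
    intro m
    have hpos : 0 < dist (u m) c := dist_pos.2 (hne m)
    have hd : Tendsto (fun n => dist (u n) c) atTop (𝓝 0) := by
      have := hu.dist (tendsto_const_nhds (x := c) (f := atTop))
      simpa using this
    have h1 : ∀ᶠ n in atTop, dist (u n) c < dist (u m) c :=
      hd.eventually (Filter.Tendsto.eventually_lt_const hpos tendsto_id)
    exact ((eventually_gt_atTop m).and h1).exists
  refine ⟨chooseSeq _ key, strictMono_nat_of_lt_succ (fun i => (chooseSeq_spec _ key i).1), ?_⟩
  have hanti : StrictAnti (fun i => dist (u (chooseSeq _ key i)) c) :=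
    strictAnti_nat_of_succ_lt (fun i => (chooseSeq_spec _ key i).2)
  intro i j hij
  by_contra hij'
  rcases Ne.lt_or_gt hij' with h | h
  · exact absurd (congrArg (fun v => dist v c) hij) (ne_of_gt (hanti h))
  · exact absurd (congrArg (fun v => dist v c) hij) (ne_of_lt (hanti h))

lemma continuous_bool_prod {A X : Type*} [TopologicalSpace A] [TopologicalSpace X]
    {f : Bool × A → X} (h : ∀ ε, Continuous (fun z => f (ε, z))) : Continuous f := by
  rw [continuous_iff_continuousAt]
  rintro ⟨ε, z⟩
  have h1 : 𝓝 (ε, z) = pure ε ×ˢ 𝓝 z := by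
    rw [nhds_prod_eq, nhds_discrete]
  rw [ContinuousAt, h1, Filter.pure_prod, Filter.tendsto_map'_iff]
  exact (h ε).continuousAt

section CaseBuilders

variable {X : Type*} [TopologicalSpace X] {E : X → X → Prop}

lemma ne_of_not_rel (hE : Equivalence E) {v w : X} (h : ¬ E v w) : v ≠ w :=
  fun e => h (e ▸ hE.refl v)

lemma case_i (hE : Equivalence E) (u : ℕ → X) (c : X)
    (huu : ∀ m n, E (u m) (u n)) (hcu : ∀ n, ¬ E c (u n))
    (hinj : Function.Injective u) (hu : Tendsto u atTop (𝓝 c)) :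
    ∃ f : Kspace → X, Function.Injective f ∧ Continuous f ∧
      ∀ x y : Kspace, E (f x) (f y) ↔ (((x : ℝ) ≠ 0 ∧ (y : ℝ) ≠ 0) ∨ x = y) := by
  have huc : ∀ n, ¬ E (u n) c := fun n h => hcu n (hE.symm h)
  have hune : ∀ n, u n ≠ c := fun n => ne_of_not_rel hE (huc n)
  refine ⟨fun z => if (z:ℝ) = 0 then c else u (idx z), ?_, continuous_K u c hu, ?_⟩
  · intro z w h
    have h' : (if (z:ℝ) = 0 then c else u (idx z)) = (if (w:ℝ) = 0 then c else u (idx w)) := h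
    by_cases hz : (z:ℝ) = 0 <;> by_cases hw : (w:ℝ) = 0
    · exact Subtype.ext (hz.trans hw.symm)
    · rw [if_pos hz, if_neg hw] at h'; exact absurd h'.symm (hune _)
    · rw [if_neg hz, if_pos hw] at h'; exact absurd h' (hune _)
    · rw [if_neg hz, if_neg hw] at h'
      have := hinj h'
      exact Subtype.ext ((spec_ne z hz).trans (by rw [this, ← spec_ne w hw]))
  · intro z w
    show E (if (z:ℝ) = 0 then c else u (idx z)) (if (w:ℝ) = 0 then c else u (idx w)) ↔ _
    by_cases hz : (z:ℝ) = 0 <;> by_cases hw : (w:ℝ) = 0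
    · rw [if_pos hz, if_pos hw]
      exact iff_of_true (hE.refl c) (Or.inr (Subtype.ext (hz.trans hw.symm)))
    · rw [if_pos hz, if_neg hw]
      constructor
      · intro h; exact absurd h (hcu _)
      · rintro (⟨h1, -⟩ | rfl)
        · exact absurd hz h1
        · exact absurd hz hw
    · rw [if_neg hz, if_pos hw]
      constructor
      · intro h; exact absurd h (huc _)
      · rintro (⟨-, h2⟩ | rfl)
        · exact absurd hw h2
        · exact absurd hw hz
    · rw [if_neg hz, if_neg hw]
      exact iff_of_true (huu _ _) (Or.inl ⟨hz, hw⟩)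

lemma case_ii (hE : Equivalence E) (x y : ℕ → X) (a b : X)
    (hxy : ∀ n, E (x n) (y n))
    (hx : ∀ m n, m ≠ n → ¬ E (x m) (x n))
    (ha : ∀ n, ¬ E a (x n)) (hb : ∀ n, ¬ E b (x n))
    (hab : ¬ E a b) (hnexy : ∀ n, x n ≠ y n)
    (hxa : Tendsto x atTop (𝓝 a)) (hyb : Tendsto y atTop (𝓝 b)) :
    ∃ f : Bool × Kspace → X, Function.Injective f ∧ Continuous f ∧
      ∀ p q : Bool × Kspace, E (f p) (f q) ↔
        (p = q ∨ (p.2 = q.2 ∧ (p.2 : ℝ) ≠ 0)) := by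
  have hay : ∀ n, ¬ E a (y n) := fun n h => ha n (hE.trans h (hE.symm (hxy n)))
  have hby : ∀ n, ¬ E b (y n) := fun n h => hb n (hE.trans h (hE.symm (hxy n)))
  have hyy : ∀ m n, m ≠ n → ¬ E (y m) (y n) :=
    fun m n hmn h => hx m n hmn (hE.trans (hxy m) (hE.trans h (hE.symm (hxy n))))
  have hxyc : ∀ m n, m ≠ n → ¬ E (x m) (y n) :=
    fun m n hmn h => hx m n hmn (hE.trans h (hE.symm (hxy n)))
  have hyxc : ∀ m n, m ≠ n → ¬ E (y m) (x n) :=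
    fun m n hmn h => hx m n hmn (hE.trans (hxy m) h)
  have hsame : ∀ (ε η : Bool) k, E (cond ε y x k) (cond η y x k) := by
    intro ε η k
    cases ε <;> cases η
    · exact hE.refl _
    · exact hxy k
    · exact hE.symm (hxy k)
    · exact hE.refl _
  have hcross : ∀ (ε η : Bool) k j, k ≠ j → ¬ E (cond ε y x k) (cond η y x j) := by
    intro ε η k j hkj
    cases ε <;> cases η
    · exact hx k j hkj
    · exact hxyc k j hkj
    · exact hyxc k j hkj
    · exact hyy k j hkj
  have hlimval : ∀ (ε η : Bool) k, ¬ E (cond ε b a) (cond η y x k) := by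
    intro ε η k
    cases ε <;> cases η
    · exact ha k
    · exact hay k
    · exact hb k
    · exact hby k
  have hvallim : ∀ (ε η : Bool) k, ¬ E (cond ε y x k) (cond η b a) :=
    fun ε η k h => hlimval η ε k (hE.symm h)
  have hlimlim : ∀ ε η : Bool, E (cond ε b a) (cond η b a) ↔ ε = η := by
    intro ε η
    cases ε <;> cases η
    · exact iff_of_true (hE.refl _) rfl
    · exact iff_of_false hab (by simp)
    · exact iff_of_false (fun h => hab (hE.symm h)) (by simp)
    · exact iff_of_true (hE.refl _) rfl
  refine ⟨fun p => if ((p.2 : Kspace) : ℝ) = 0 then cond p.1 b a else cond p.1 y x (idx p.2),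
    ?_, ?_, ?_⟩
  · rintro ⟨ε, z⟩ ⟨η, w⟩ h
    have h' : (if (z:ℝ) = 0 then cond ε b a else cond ε y x (idx z))
        = (if (w:ℝ) = 0 then cond η b a else cond η y x (idx w)) := h
    by_cases hz : (z:ℝ) = 0 <;> by_cases hw : (w:ℝ) = 0
    · rw [if_pos hz, if_pos hw] at h'
      have hεη : ε = η := by
        by_contra hne
        exact (ne_of_not_rel hE (fun hEE => hne ((hlimlim ε η).mp hEE))) h'
      rw [Prod.ext_iff]
      exact ⟨hεη, Subtype.ext (hz.trans hw.symm)⟩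
    · rw [if_pos hz, if_neg hw] at h'
      exact absurd h' (ne_of_not_rel hE (hlimval ε η _))
    · rw [if_neg hz, if_pos hw] at h'
      exact absurd h'.symm (ne_of_not_rel hE (hlimval η ε _))
    · rw [if_neg hz, if_neg hw] at h'
      have hidx : idx z = idx w := by
        by_contra hkj
        exact (ne_of_not_rel hE (hcross ε η _ _ hkj)) h'
      have hzw : z = w := Subtype.ext ((spec_ne z hz).trans (by rw [hidx, ← spec_ne w hw]))
      have hεη : ε = η := by
        by_contra hne
        cases ε <;> cases η
        · exact hne rfl
        · rw [hidx] at h'; exact hnexy _ h'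
        · rw [hidx] at h'; exact hnexy _ h'.symm
        · exact hne rfl
      rw [Prod.ext_iff]
      exact ⟨hεη, hzw⟩
  · apply continuous_bool_prod
    intro ε
    exact continuous_K (cond ε y x) (cond ε b a) (by cases ε <;> [exact hxa; exact hyb])
  · rintro ⟨ε, z⟩ ⟨η, w⟩
    show E (if (z:ℝ) = 0 then cond ε b a else cond ε y x (idx z))
        (if (w:ℝ) = 0 then cond η b a else cond η y x (idx w)) ↔
        ((ε, z) = (η, w) ∨ (z = w ∧ (z:ℝ) ≠ 0))
    by_cases hz : (z:ℝ) = 0 <;> by_cases hw : (w:ℝ) = 0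
    · rw [if_pos hz, if_pos hw, hlimlim]
      constructor
      · intro hεη
        exact Or.inl (by rw [Prod.ext_iff]; exact ⟨hεη, Subtype.ext (hz.trans hw.symm)⟩)
      · rintro (hpq | ⟨-, hne0⟩)
        · exact (Prod.ext_iff.mp hpq).1
        · exact absurd hz hne0
    · rw [if_pos hz, if_neg hw]
      refine iff_of_false (hlimval ε η _) ?_
      rintro (hpq | ⟨hzw, -⟩)
      · exact hw (by rw [← show z = w from congrArg Prod.snd hpq]; exact hz)
      · exact hw (hzw ▸ hz)
    · rw [if_neg hz, if_pos hw]
      refine iff_of_false (hvallim ε η _) ?_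
      rintro (hpq | ⟨hzw, hne0⟩)
      · exact hz (by rw [show z = w from congrArg Prod.snd hpq]; exact hw)
      · exact hz (by rw [hzw]; exact hw)
    · rw [if_neg hz, if_neg hw]
      constructor
      · intro h
        have hidx : idx z = idx w := by
          by_contra hkj
          exact hcross ε η _ _ hkj h
        have hzw : z = w := Subtype.ext ((spec_ne z hz).trans (by rw [hidx, ← spec_ne w hw]))
        exact Or.inr ⟨hzw, hz⟩
      · rintro (hpq | ⟨hzw, -⟩)
        · have h1 : ε = η := congrArg Prod.fst hpq
          have h2 : z = w := congrArg Prod.snd hpq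
          rw [h1, h2]
          exact hsame η η _
        · rw [show idx z = idx w from by rw [hzw]]
          exact hsame ε η _

end CaseBuilders

end KAux

open KAux in
theorem nonclosed_equiv_dichotomy {X : Type*} [TopologicalSpace X]
    [TopologicalSpace.MetrizableSpace X] (E : X → X → Prop) (hE : Equivalence E)
    (hnc : ¬ IsClosed {p : X × X | E p.1 p.2}) :
    (∃ f : Kspace → X, Function.Injective f ∧ Continuous f ∧
        ∀ x y : Kspace, E (f x) (f y) ↔
          (((x : ℝ) ≠ 0 ∧ (y : ℝ) ≠ 0) ∨ x = y)) ∨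
    (∃ f : Bool × Kspace → X, Function.Injective f ∧ Continuous f ∧
        ∀ p q : Bool × Kspace, E (f p) (f q) ↔
          (p = q ∨ (p.2 = q.2 ∧ (p.2 : ℝ) ≠ 0))) := by
  classical
  letI : MetricSpace X := TopologicalSpace.metrizableSpaceMetric X
  set S := {p : X × X | E p.1 p.2} with hSdef
  have hex : ∃ p : X × X, p ∈ closure S ∧ p ∉ S := by
    by_contra h
    push_neg at h
    exact hnc (isClosed_of_closure_subset h)
  obtain ⟨⟨a, b⟩, hcl, hnS⟩ := hex
  have hab : ¬ E a b := hnS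
  obtain ⟨u, huS, hulim⟩ := mem_closure_iff_seq_limit.mp hcl
  set x : ℕ → X := fun n => (u n).1 with hxdef
  set y : ℕ → X := fun n => (u n).2 with hydef
  have hxy : ∀ n, E (x n) (y n) := huS
  have hxa : Tendsto x atTop (𝓝 a) := (continuous_fst.tendsto (a, b)).comp hulim
  have hyb : Tendsto y atTop (𝓝 b) := (continuous_snd.tendsto (a, b)).comp hulim
  by_cases hA : ∃ᶠ n in atTop, E a (x n)
  · -- Case A : (i) with limit b
    obtain ⟨φ, hφ, hφE⟩ := Filter.extraction_of_frequently_atTop hA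
    set v : ℕ → X := y ∘ φ with hv
    have hva : ∀ n, E a (v n) := fun n => hE.trans (hφE n) (hxy (φ n))
    have hvv : ∀ m n, E (v m) (v n) := fun m n => hE.trans (hE.symm (hva m)) (hva n)
    have hbv : ∀ n, ¬ E b (v n) := fun n h => hab (hE.trans (hva n) (hE.symm h))
    have hvb : Tendsto v atTop (𝓝 b) := hyb.comp hφ.tendsto_atTop
    have hvne : ∀ n, v n ≠ b := fun n => (ne_of_not_rel hE (hbv n)).symm
    obtain ⟨ψ, hψ, hinj⟩ := exists_inj_subseq v b hvb hvne
    exact Or.inl (case_i hE (v ∘ ψ) b (fun m n => hvv _ _) (fun n => hbv _) hinj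
      (hvb.comp hψ.tendsto_atTop))
  by_cases hB : ∃ᶠ n in atTop, E b (y n)
  · -- Case B : (i) with limit a
    obtain ⟨φ, hφ, hφE⟩ := Filter.extraction_of_frequently_atTop hB
    set v : ℕ → X := x ∘ φ with hv
    have hvb' : ∀ n, E b (v n) := fun n => hE.trans (hφE n) (hE.symm (hxy (φ n)))
    have hvv : ∀ m n, E (v m) (v n) := fun m n => hE.trans (hE.symm (hvb' m)) (hvb' n)
    have hav : ∀ n, ¬ E a (v n) := fun n h => hab (hE.trans h (hE.symm (hvb' n)))
    have hva : Tendsto v atTop (𝓝 a) := hxa.comp hφ.tendsto_atTop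
    have hvne : ∀ n, v n ≠ a := fun n => (ne_of_not_rel hE (hav n)).symm
    obtain ⟨ψ, hψ, hinj⟩ := exists_inj_subseq v a hva hvne
    exact Or.inl (case_i hE (v ∘ ψ) a (fun m n => hvv _ _) (fun n => hav _) hinj
      (hva.comp hψ.tendsto_atTop))
  -- Case C
  rw [Filter.not_frequently] at hA hB
  have habne : a ≠ b := ne_of_not_rel hE hab
  have hne_ev : ∀ᶠ n in atTop, x n ≠ y n := by
    have hdist : Tendsto (fun n => dist (x n) (y n)) atTop (𝓝 (dist a b)) := hxa.dist hyb
    have h0 : ∀ᶠ n in atTop, dist (x n) (y n) ≠ 0 :=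
      hdist.eventually_ne (dist_ne_zero.2 habne)
    filter_upwards [h0] with n hn
    exact fun e => hn (by rw [e, dist_self])
  obtain ⟨N, hN⟩ := Filter.eventually_atTop.mp (hA.and (hB.and hne_ev))
  set x' : ℕ → X := fun n => x (n + N) with hx'def
  set y' : ℕ → X := fun n => y (n + N) with hy'def
  have hax' : ∀ n, ¬ E a (x' n) := fun n => (hN (n + N) (Nat.le_add_left N n)).1
  have hby' : ∀ n, ¬ E b (y' n) := fun n => (hN (n + N) (Nat.le_add_left N n)).2.1
  have hne' : ∀ n, x' n ≠ y' n := fun n => (hN (n + N) (Nat.le_add_left N n)).2.2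
  have hxy' : ∀ n, E (x' n) (y' n) := fun n => hxy _
  have hshift : Tendsto (fun n : ℕ => n + N) atTop atTop := Filter.tendsto_add_atTop_nat N
  have hxa' : Tendsto x' atTop (𝓝 a) := hxa.comp hshift
  have hyb' : Tendsto y' atTop (𝓝 b) := hyb.comp hshift
  by_cases hC : ∃ m, ∃ᶠ n in atTop, E (x' m) (x' n)
  · -- some class infinite : (i) with limit a
    obtain ⟨m, hm⟩ := hC
    obtain ⟨φ, hφ, hφE⟩ := Filter.extraction_of_frequently_atTop hm
    set v : ℕ → X := x' ∘ φ with hv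
    have hvv : ∀ i j, E (v i) (v j) := fun i j => hE.trans (hE.symm (hφE i)) (hφE j)
    have hav : ∀ n, ¬ E a (v n) := fun n => hax' (φ n)
    have hva : Tendsto v atTop (𝓝 a) := hxa'.comp hφ.tendsto_atTop
    have hvne : ∀ n, v n ≠ a := fun n => (ne_of_not_rel hE (hav n)).symm
    obtain ⟨ψ, hψ, hinj⟩ := exists_inj_subseq v a hva hvne
    exact Or.inl (case_i hE (v ∘ ψ) a (fun i j => hvv _ _) (fun n => hav _) hinj
      (hva.comp hψ.tendsto_atTop))
  · -- all classes finite : (ii)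
    push_neg at hC
    have hC' : ∀ m, ∀ᶠ n in atTop, ¬ E (x' m) (x' n) := fun m =>
      hC m
    have key : ∀ m, ∃ n, m < n ∧ ∀ j ≤ m, ¬ E (x' j) (x' n) := by
      intro m
      have hall : ∀ᶠ n in atTop, ∀ j ∈ Set.Iic m, ¬ E (x' j) (x' n) :=
        (Set.finite_Iic m).eventually_all.mpr fun j _ => hC' j
      obtain ⟨n, hn1, hn2⟩ := ((eventually_gt_atTop m).and hall).exists
      exact ⟨n, hn1, fun j hj => hn2 j (Set.mem_Iic.mpr hj)⟩
    set φ : ℕ → ℕ := chooseSeq _ key with hφdef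
    have hφmono : StrictMono φ :=
      strictMono_nat_of_lt_succ fun i => (chooseSeq_spec _ key i).1
    have hpair : ∀ i j, i < j → ¬ E (x' (φ i)) (x' (φ j)) := by
      intro i j hij
      obtain ⟨j', rfl⟩ : ∃ j', j = j' + 1 := ⟨j - 1, by omega⟩
      exact (chooseSeq_spec _ key j').2 (φ i) (hφmono.monotone (by omega))
    have hx'' : ∀ i j, i ≠ j → ¬ E (x' (φ i)) (x' (φ j)) := by
      intro i j hij
      rcases hij.lt_or_gt with h | h
      · exact hpair _ _ h
      · exact fun he => hpair _ _ h (hE.symm he)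
    refine Or.inr (case_ii hE (x' ∘ φ) (y' ∘ φ) a b (fun n => hxy' (φ n)) hx''
      (fun n => hax' (φ n)) ?_ hab (fun n => hne' (φ n))
      (hxa'.comp hφmono.tendsto_atTop) (hyb'.comp hφmono.tendsto_atTop))
    exact fun n h => hby' (φ n) (hE.trans h (hxy' (φ n)))
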